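/- Let M be a preGarside monoid, let f_L be a left selector on A(M) in M and f_R a right selector on A(M) in M, where A(M) is the set of atoms of M (which generates M). Let X ⊆ A(M) and let N be the submonoid of M generated by X. Then N is a parabolic submonoid of M if and only if: (a) for all distinct x,y ∈ X, if x ∨_L y exists then f_L(x,y) ∈ X* and f_L(y,x) ∈ X*, and if x ∨_R y exists then f_R(x,y) ∈ X* and f_R(y,x) ∈ X*; and (b) for all x ∈ X and y ∈ A(M) \ X, if x ∨_L y exists then f_L(x,y) ∉ X*, and if x ∨_R y exists then f_R(y,x) ∉ X*. -/

import Mathlib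

namespace PG

variable {M : Type*} [Monoid M]

/-- `LDvd a b` : `a` left-divides `b`. -/
def LDvd (a b : M) : Prop := ∃ c, b = a * c

/-- `RDvd a b` : `a` right-divides `b`. -/
def RDvd (a b : M) : Prop := ∃ c, b = c * a

/-- A monoid is cancellative if `c * a * d = c * b * d` implies `a = b`. -/
def IsCancellative (M : Type*) [Monoid M] : Prop :=
  ∀ a b c d : M, c * a * d = c * b * d → a = b

/-- A monoid is atomic if it admits a norm `ν : M → ℕ` with `ν a > 0` for `a ≠ 1`
and `ν (a * b) ≥ ν a + ν b`. -/
def IsAtomicMon (M : Type*) [Monoid M] : Prop :=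
  ∃ ν : M → ℕ, (∀ a : M, a ≠ 1 → 0 < ν a) ∧ ∀ a b : M, ν a + ν b ≤ ν (a * b)

/-- `m` is the least common multiple of `a` and `b` for left-divisibility. -/
def IsLcmL (a b m : M) : Prop :=
  LDvd a m ∧ LDvd b m ∧ ∀ c : M, LDvd a c → LDvd b c → LDvd m c

/-- `m` is the least common multiple of `a` and `b` for right-divisibility. -/
def IsLcmR (a b m : M) : Prop :=
  RDvd a m ∧ RDvd b m ∧ ∀ c : M, RDvd a c → RDvd b c → RDvd m c

/-- `d` is the greatest common left-divisor of `a` and `b`. -/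
def IsGcdL (a b d : M) : Prop :=
  LDvd d a ∧ LDvd d b ∧ ∀ c : M, LDvd c a → LDvd c b → LDvd c d

/-- `d` is the greatest common right-divisor of `a` and `b`. -/
def IsGcdR (a b d : M) : Prop :=
  RDvd d a ∧ RDvd d b ∧ ∀ c : M, RDvd c a → RDvd c b → RDvd c d

/-- A preGarside monoid: cancellative, atomic, and any two elements admitting a
common multiple (on the appropriate side) admit a least one. -/
def IsPreGarside (M : Type*) [Monoid M] : Prop :=
  IsCancellative M ∧ IsAtomicMon M ∧
    (∀ a b : M, (∃ c, LDvd a c ∧ LDvd b c) → ∃ m, IsLcmL a b m) ∧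
    (∀ a b : M, (∃ c, RDvd a c ∧ RDvd b c) → ∃ m, IsLcmR a b m)

/-- A submonoid is special if it is closed under factors. -/
def IsSpecial (N : Submonoid M) : Prop := ∀ a b : M, a * b ∈ N → a ∈ N ∧ b ∈ N

/-- A (standard) parabolic submonoid: special and closed under all existing lcms. -/
def IsParabolic (N : Submonoid M) : Prop :=
  IsSpecial N ∧ (∀ a b m : M, a ∈ N → b ∈ N → IsLcmL a b m → m ∈ N) ∧
    ∀ a b m : M, a ∈ N → b ∈ N → IsLcmR a b m → m ∈ N

/-- `b` is a factor of `a`. -/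
def Factor (b a : M) : Prop := ∃ c d : M, a = c * b * d

/-- The set of factors of `a`. -/
def Factors (a : M) : Set M := {b | Factor b a}

/-- An element is balanced when its left-divisors and right-divisors coincide. -/
def IsBalanced (a : M) : Prop := {b : M | LDvd b a} = {b : M | RDvd b a}

/-- A Garside element: balanced, and its factors generate the monoid. -/
def IsGarsideElt (Δ : M) : Prop := IsBalanced Δ ∧ Submonoid.closure (Factors Δ) = ⊤

/-- A Garside monoid: a preGarside monoid possessing a Garside element. -/
def IsGarside (M : Type*) [Monoid M] : Prop := IsPreGarside M ∧ ∃ Δ : M, IsGarsideElt Δ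

/-- The factors of `a` computed inside the submonoid `N`. -/
def FactorsIn (N : Submonoid M) (a : M) : Set M :=
  {b | b ∈ N ∧ ∃ c ∈ N, ∃ d ∈ N, a = c * b * d}

/-- `Δ` is a Garside element of the submonoid `N`: it is balanced in `N` and its
factors in `N` generate `N`. -/
def IsGarsideEltIn (N : Submonoid M) (Δ : M) : Prop :=
  Δ ∈ N ∧ ({b : M | b ∈ N ∧ ∃ c ∈ N, Δ = b * c} = {b : M | b ∈ N ∧ ∃ c ∈ N, Δ = c * b}) ∧
    Submonoid.closure (FactorsIn N Δ) = N

/-- The right coset `g * N` (an `R_N`-class). -/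
def RCoset (N : Submonoid M) (g : M) : Set M := {x | ∃ h ∈ N, x = g * h}

/-- The left coset `N * g` (an `L_N`-class). -/
def LCoset (N : Submonoid M) (g : M) : Set M := {x | ∃ h ∈ N, x = h * g}

/-- `RReduces N B A` : the `R_N`-class `B` reduces in one step to the `R_N`-class `A`,
i.e. `A = g₁ N`, `B = g₂ N` with `g₂ ∈ g₁ N` and `g₁ ∉ g₂ N`. -/
def RReduces (N : Submonoid M) (B A : Set M) : Prop :=
  ∃ g₁ g₂ : M, A = RCoset N g₁ ∧ B = RCoset N g₂ ∧ g₂ ∈ RCoset N g₁ ∧ g₁ ∉ RCoset N g₂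

/-- `LReduces N B A` : the `L_N`-class `B` reduces in one step to the `L_N`-class `A`. -/
def LReduces (N : Submonoid M) (B A : Set M) : Prop :=
  ∃ g₁ g₂ : M, A = LCoset N g₁ ∧ B = LCoset N g₂ ∧ g₂ ∈ LCoset N g₁ ∧ g₁ ∉ LCoset N g₂

/-- `N` has the `R` confluence property: the reduction rule on `R_N`-classes is
Noetherian and locally confluent. -/
def RConfluence (N : Submonoid M) : Prop :=
  (¬ ∃ f : ℕ → Set M, ∀ n : ℕ, RReduces N (f n) (f (n + 1))) ∧
    ∀ C A B : Set M, RReduces N C A → RReduces N C B →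
      ∃ D : Set M, Relation.ReflTransGen (RReduces N) A D ∧
        Relation.ReflTransGen (RReduces N) B D

/-- `N` has the `L` confluence property. -/
def LConfluence (N : Submonoid M) : Prop :=
  (¬ ∃ f : ℕ → Set M, ∀ n : ℕ, LReduces N (f n) (f (n + 1))) ∧
    ∀ C A B : Set M, LReduces N C A → LReduces N C B →
      ∃ D : Set M, Relation.ReflTransGen (LReduces N) A D ∧
        Relation.ReflTransGen (LReduces N) B D

/-- `N` has the confluence property. -/
def Confluence (N : Submonoid M) : Prop := RConfluence N ∧ LConfluence N

/-- The `R_N`-class `C` is minimal: whenever `g` represents `C` and `g = g' * h` with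
`h ∈ N`, one has `g' N = C`. -/
def IsMinimalRCoset (N : Submonoid M) (C : Set M) : Prop :=
  (∃ g : M, C = RCoset N g) ∧
    ∀ g g' h : M, h ∈ N → C = RCoset N g → g = g' * h → RCoset N g' = C

/-- The `L_N`-class `C` is minimal. -/
def IsMinimalLCoset (N : Submonoid M) (C : Set M) : Prop :=
  (∃ g : M, C = LCoset N g) ∧
    ∀ g g' h : M, h ∈ N → C = LCoset N g → g = h * g' → LCoset N g' = C

/-- The set of atoms of `M`. -/
def AtomSet (M : Type*) [Monoid M] : Set M :=
  {a | a ≠ 1 ∧ ∀ b c : M, a = b * c → b = 1 ∨ c = 1}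

/-- `|x|` : the least number of factors of `Δ` needed to write `x` as a product. -/
noncomputable def lenFactors (Δ x : M) : ℕ :=
  sInf {k | ∃ l : List M, l.length = k ∧ (∀ y ∈ l, y ∈ Factors Δ) ∧ l.prod = x}

section Amalgam

variable {M₁ M₂ N : Type*} [Monoid M₁] [Monoid M₂] [Monoid N]

/-- The congruence on the free product `M₁ ∗ M₂` identifying `ι₁ h` with `ι₂ h`
for every `h ∈ N`. -/
def amalgamCon (ι₁ : N →* M₁) (ι₂ : N →* M₂) : Con (Monoid.Coprod M₁ M₂) :=
  conGen fun a b => ∃ h : N, a = Monoid.Coprod.inl (ι₁ h) ∧ b = Monoid.Coprod.inr (ι₂ h)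

/-- The amalgamated product `M₁ *_N M₂` : the pushout of `ι₁ : N →* M₁` and
`ι₂ : N →* M₂` in the category of monoids. -/
def Amalgam (ι₁ : N →* M₁) (ι₂ : N →* M₂) : Type _ := (amalgamCon ι₁ ι₂).Quotient

instance (ι₁ : N →* M₁) (ι₂ : N →* M₂) : Monoid (Amalgam ι₁ ι₂) :=
  inferInstanceAs (Monoid (amalgamCon ι₁ ι₂).Quotient)

/-- The canonical morphism `M₁ →* M₁ *_N M₂`. -/
def amalgamInl (ι₁ : N →* M₁) (ι₂ : N →* M₂) : M₁ →* Amalgam ι₁ ι₂ :=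
  (amalgamCon ι₁ ι₂).mk'.comp Monoid.Coprod.inl

/-- The canonical morphism `M₂ →* M₁ *_N M₂`. -/
def amalgamInr (ι₁ : N →* M₁) (ι₂ : N →* M₂) : M₂ →* Amalgam ι₁ ι₂ :=
  (amalgamCon ι₁ ι₂).mk'.comp Monoid.Coprod.inr

end Amalgam

/-! ### Auxiliary machinery for Theorem 2.8 -/

section Aux28

open MulOpposite

variable {M : Type*} [Monoid M]

theorem LDvd.refl' (a : M) : LDvd a a := ⟨1, (mul_one a).symm⟩

theorem LDvd.one' (a : M) : LDvd 1 a := ⟨a, (one_mul a).symm⟩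

theorem LDvd.trans' {a b c : M} (h1 : LDvd a b) (h2 : LDvd b c) : LDvd a c := by
  obtain ⟨u, rfl⟩ := h1; obtain ⟨v, rfl⟩ := h2; exact ⟨u * v, mul_assoc _ _ _⟩

theorem lcmL_comm {a b m : M} (h : IsLcmL a b m) : IsLcmL b a m :=
  ⟨h.2.1, h.1, fun c h1 h2 => h.2.2 c h2 h1⟩

/-- Left cancellation from two-sided cancellativity. -/
theorem mk_mcl (h : IsCancellative M) : ∀ a b c : M, a * b = a * c → b = c := by
  intro a b c hh
  exact h b c a 1 (by simpa using hh)

/-- Right cancellation from two-sided cancellativity. -/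
theorem mk_mcr (h : IsCancellative M) : ∀ a b c : M, b * a = c * a → b = c := by
  intro a b c hh
  exact h b c 1 a (by simpa using hh)

/-- In an atomic monoid, `a * b = 1` forces `a = b = 1`. -/
theorem mk_one (h : IsAtomicMon M) : ∀ a b : M, a * b = 1 → a = 1 ∧ b = 1 := by
  obtain ⟨ν, h1, h2⟩ := h
  have hν1 : ν 1 = 0 := by have := h2 1 1; rw [mul_one] at this; omega
  intro a b hab
  have hm := h2 a b
  rw [hab, hν1] at hm
  constructor
  · by_contra hc; have := h1 a hc; omega
  · by_contra hc; have := h1 b hc; omega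

theorem ldvd_antisymm' (hmcl : ∀ a b c : M, a * b = a * c → b = c)
    (hone : ∀ a b : M, a * b = 1 → a = 1 ∧ b = 1) {a b : M}
    (h1 : LDvd a b) (h2 : LDvd b a) : a = b := by
  obtain ⟨c, rfl⟩ := h1
  obtain ⟨d, hd⟩ := h2
  rw [mul_assoc] at hd
  have hcd : (1 : M) = c * d := hmcl a 1 (c * d) (by rw [mul_one, ← hd])
  have hc1 : c = 1 := (hone c d hcd.symm).1
  rw [hc1, mul_one]

theorem rdvd_antisymm' (hmcr : ∀ a b c : M, b * a = c * a → b = c)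
    (hone : ∀ a b : M, a * b = 1 → a = 1 ∧ b = 1) {a b : M}
    (h1 : RDvd a b) (h2 : RDvd b a) : a = b := by
  obtain ⟨c, rfl⟩ := h1
  obtain ⟨d, hd⟩ := h2
  rw [← mul_assoc] at hd
  have hcd : (1 : M) = d * c := hmcr a 1 (d * c) (by rw [one_mul, ← hd])
  have hd1 : d = 1 := (hone d c hcd.symm).1
  rw [hd1, one_mul] at hd; exact hd

theorem lcmL_unique' (hmcl : ∀ a b c : M, a * b = a * c → b = c)
    (hone : ∀ a b : M, a * b = 1 → a = 1 ∧ b = 1) {a b m m' : M}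
    (h : IsLcmL a b m) (h' : IsLcmL a b m') : m = m' :=
  ldvd_antisymm' hmcl hone (h.2.2 m' h'.1 h'.2.1) (h'.2.2 m h.1 h.2.1)

theorem lcmR_unique' (hmcr : ∀ a b c : M, b * a = c * a → b = c)
    (hone : ∀ a b : M, a * b = 1 → a = 1 ∧ b = 1) {a b m m' : M}
    (h : IsLcmR a b m) (h' : IsLcmR a b m') : m = m' :=
  rdvd_antisymm' hmcr hone (h.2.2 m' h'.1 h'.2.1) (h'.2.2 m h.1 h.2.1)

/-- An atom lying in the submonoid generated by a set of atoms lies in the set. -/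
theorem atom_mem_of_mem_closure {X : Set M} (hX : X ⊆ AtomSet M) {y : M}
    (hy : y ∈ AtomSet M) (h : y ∈ Submonoid.closure X) : y ∈ X := by
  obtain ⟨l, hl, hp⟩ := Submonoid.exists_list_of_mem_closure h
  cases l with
  | nil => exact absurd hp.symm (by simpa using hy.1)
  | cons z t =>
    rw [List.prod_cons] at hp
    rcases hy.2 z t.prod hp.symm with h1 | h1
    · exact absurd h1 (hX (hl z (by simp))).1
    · have : y = z := by rw [← hp, h1, mul_one]
      rw [this]; exact hl z (by simp)

end Aux28

section Bundle28

open MulOpposite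

/-- A one-sided bundle of hypotheses for the left-divisibility theory. -/
structure Bundle (M : Type*) [Monoid M] (X : Set M) where
  nu : M → ℕ
  nu_pos : ∀ a : M, a ≠ 1 → 0 < nu a
  nu_mul : ∀ a b : M, nu a + nu b ≤ nu (a * b)
  mcl : ∀ a b c : M, a * b = a * c → b = c
  lcm_ex : ∀ a b : M, (∃ c, LDvd a c ∧ LDvd b c) → ∃ m, IsLcmL a b m
  gen : Submonoid.closure (AtomSet M) = ⊤
  f : M → M → List M
  hf : ∀ x y : M, x ∈ AtomSet M → y ∈ AtomSet M → x ≠ y → (∃ m, IsLcmL x y m) →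
    (∀ l ∈ f x y, l ∈ AtomSet M) ∧ IsLcmL x y (x * (f x y).prod)
  hX : X ⊆ AtomSet M
  ha : ∀ x ∈ X, ∀ y ∈ X, x ≠ y → (∃ m, IsLcmL x y m) → ∀ l ∈ f x y, l ∈ X
  hb : ∀ x ∈ X, ∀ y ∈ AtomSet M, y ∉ X → (∃ m, IsLcmL x y m) → ¬ ∀ l ∈ f x y, l ∈ X

namespace Bundle

variable {M : Type*} [Monoid M] {X : Set M} (B : Bundle M X)
include B

theorem nu_one : B.nu 1 = 0 := by
  have := B.nu_mul 1 1; rw [mul_one] at this; omega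

theorem mul_eq_one {a b : M} (h : a * b = 1) : a = 1 ∧ b = 1 := by
  have hm := B.nu_mul a b
  rw [h, B.nu_one] at hm
  constructor
  · by_contra h1; have := B.nu_pos a h1; omega
  · by_contra h1; have := B.nu_pos b h1; omega

theorem nu_ldvd {a b : M} (h : LDvd a b) : B.nu a ≤ B.nu b := by
  obtain ⟨c, rfl⟩ := h; have := B.nu_mul a c; omega

theorem ldvd_antisymm {a b : M} (h1 : LDvd a b) (h2 : LDvd b a) : a = b :=
  ldvd_antisymm' B.mcl (fun a b h => B.mul_eq_one h) h1 h2

theorem lcm_unique {a b m m' : M} (h : IsLcmL a b m) (h' : IsLcmL a b m') : m = m' :=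
  B.ldvd_antisymm (h.2.2 m' h'.1 h'.2.1) (h'.2.2 m h.1 h.2.1)

/-- Head-cancellation for lcms. -/
theorem head_lcm {x a b m : M} (h : IsLcmL (x * a) (x * b) m) :
    ∃ m', m = x * m' ∧ IsLcmL a b m' := by
  obtain ⟨s, hs⟩ := h.1
  refine ⟨a * s, by rw [hs, mul_assoc], ⟨s, rfl⟩, ?_, ?_⟩
  · obtain ⟨t, ht⟩ := h.2.1
    refine ⟨t, B.mcl x _ _ ?_⟩
    rw [← mul_assoc, ← hs, ht, mul_assoc]
  · intro c hac hbc
    obtain ⟨w, rfl⟩ := hac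
    obtain ⟨w', hw'⟩ := hbc
    have hcm : LDvd m (x * (a * w)) :=
      h.2.2 _ ⟨w, by rw [mul_assoc]⟩ ⟨w', by rw [hw', mul_assoc]⟩
    obtain ⟨t', ht'⟩ := hcm
    refine ⟨t', B.mcl x _ _ ?_⟩
    rw [ht', hs, mul_assoc, mul_assoc, mul_assoc]

/-- **Core lemma**: an atom left-dividing an element of `⟨X⟩` lies in `X` and the
complement stays in `⟨X⟩`. -/
theorem core : ∀ n : ℕ, ∀ a : M, a ∈ Submonoid.closure X → B.nu a ≤ n →
    ∀ y, y ∈ AtomSet M → LDvd y a → y ∈ X ∧ ∃ a₂ ∈ Submonoid.closure X, a = y * a₂ := by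
  intro n
  induction n using Nat.strong_induction_on with
  | _ n IH =>
  intro a ha hn y hy hdvd
  obtain ⟨l, hl, hp⟩ := Submonoid.exists_list_of_mem_closure ha
  cases l with
  | nil =>
    exfalso
    obtain ⟨e, he⟩ := hdvd
    simp only [List.prod_nil] at hp
    rw [← hp] at he
    exact hy.1 (B.mul_eq_one he.symm).1
  | cons x t =>
    rw [List.prod_cons] at hp
    have hxX : x ∈ X := hl x (by simp)
    have hxA : x ∈ AtomSet M := B.hX hxX
    have hcX : t.prod ∈ Submonoid.closure X :=
      list_prod_mem (fun z hz => Submonoid.subset_closure (hl z (by simp [hz])))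
    have hnc : B.nu t.prod < n := by
      have h1 := B.nu_mul x t.prod
      have h2 := B.nu_pos x hxA.1
      rw [hp] at h1; omega
    by_cases hxy : y = x
    · subst hxy; exact ⟨hxX, t.prod, hcX, hp.symm⟩
    · have hne : x ≠ y := fun h => hxy h.symm
      have hxa : LDvd x a := ⟨t.prod, hp.symm⟩
      have hex : ∃ m, IsLcmL x y m := B.lcm_ex x y ⟨a, hxa, hdvd⟩
      obtain ⟨hatoms, hlcm⟩ := B.hf x y hxA hy hne hex
      obtain ⟨e, he⟩ := hlcm.2.2 a hxa hdvd
      have hue : t.prod = (B.f x y).prod * e := B.mcl x _ _ (by rw [hp, he, mul_assoc])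
      have peel : ∀ t' : List M, ∀ c' e' : M, (∀ z ∈ t', z ∈ AtomSet M) →
          c' ∈ Submonoid.closure X → B.nu c' < n → c' = t'.prod * e' →
          (∀ z ∈ t', z ∈ X) ∧ e' ∈ Submonoid.closure X := by
        intro t'
        induction t' with
        | nil =>
          intro c' e' _ hc' _ hee
          simp only [List.prod_nil, one_mul] at hee
          exact ⟨by simp, hee ▸ hc'⟩
        | cons z t'' IHt =>
          intro c' e' hat hc' hnc' hee
          rw [List.prod_cons, mul_assoc] at hee
          have hz : z ∈ AtomSet M := hat z (by simp)
          obtain ⟨hzX, c₂, hc₂, hcc⟩ :=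
            IH (B.nu c') hnc' c' hc' le_rfl z hz ⟨t''.prod * e', hee⟩
          have heq : t''.prod * e' = c₂ := B.mcl z _ _ (hee.symm.trans hcc)
          have hn₂ : B.nu c₂ < n := by
            have h1 := B.nu_mul z c₂
            have h2 := B.nu_pos z hz.1
            rw [← hcc] at h1
            omega
          obtain ⟨h1, h2⟩ := IHt c₂ e' (fun w hw => hat w (by simp [hw])) hc₂ hn₂ heq.symm
          refine ⟨?_, h2⟩
          intro w hw
          rcases List.mem_cons.mp hw with h | h
          · rw [h]; exact hzX
          · exact h1 w h
      obtain ⟨hlX, heX⟩ := peel (B.f x y) t.prod e hatoms hcX hnc hue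
      by_cases hyX : y ∈ X
      · have hexyx : ∃ m, IsLcmL y x m := ⟨_, lcmL_comm hlcm⟩
        obtain ⟨hatoms', hlcm'⟩ := B.hf y x hy hxA (Ne.symm hne) hexyx
        have hvX : (B.f y x).prod ∈ Submonoid.closure X :=
          list_prod_mem
            (fun z hz => Submonoid.subset_closure (B.ha y hyX x hxX (Ne.symm hne) hexyx z hz))
        have hmm : y * (B.f y x).prod = x * (B.f x y).prod :=
          B.lcm_unique (lcmL_comm hlcm') hlcm
        refine ⟨hyX, (B.f y x).prod * e, mul_mem hvX heX, ?_⟩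
        have : y * ((B.f y x).prod * e) = a := by
          rw [← mul_assoc, hmm, mul_assoc, ← hue, hp]
        exact this.symm
      · exact absurd hlX (B.hb x hxX y hy hyX hex)

/-- Peeling a product of atoms off an element of `⟨X⟩`. -/
theorem prod_peel : ∀ l : List M, (∀ z ∈ l, z ∈ AtomSet M) → ∀ a ∈ Submonoid.closure X,
    ∀ e, a = l.prod * e → l.prod ∈ Submonoid.closure X ∧ e ∈ Submonoid.closure X := by
  intro l
  induction l with
  | nil =>
    intro _ a ha e hee
    simp only [List.prod_nil, one_mul] at hee
    exact ⟨one_mem _, hee ▸ ha⟩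
  | cons z t IHt =>
    intro hat a ha e hee
    rw [List.prod_cons, mul_assoc] at hee
    have hz := hat z (by simp)
    obtain ⟨hzX, a₂, ha₂, haa⟩ := B.core (B.nu a) a ha le_rfl z hz ⟨t.prod * e, hee⟩
    have heq : t.prod * e = a₂ := B.mcl z _ _ (hee.symm.trans haa)
    obtain ⟨h1, h2⟩ := IHt (fun w hw => hat w (by simp [hw])) a₂ ha₂ e heq.symm
    refine ⟨?_, h2⟩
    rw [List.prod_cons]
    exact mul_mem (Submonoid.subset_closure hzX) h1

/-- `⟨X⟩` is closed under left-divisors. -/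
theorem ldvd_mem {a b : M} (ha : a ∈ Submonoid.closure X) (h : LDvd b a) :
    b ∈ Submonoid.closure X := by
  have hb : b ∈ Submonoid.closure (AtomSet M) := by rw [B.gen]; trivial
  obtain ⟨l, hl, hp⟩ := Submonoid.exists_list_of_mem_closure hb
  obtain ⟨e, he⟩ := h
  have := (B.prod_peel l hl a ha e (by rw [he, hp])).1
  rwa [hp] at this

/-- `⟨X⟩` is closed under existing left-lcms. -/
theorem lcm_mem : ∀ n : ℕ, ∀ m : M, B.nu m ≤ n → ∀ a b, a ∈ Submonoid.closure X →
    b ∈ Submonoid.closure X → IsLcmL a b m → m ∈ Submonoid.closure X := by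
  intro n
  induction n using Nat.strong_induction_on with
  | _ n IH =>
  intro m hn a b ha hb hm
  obtain ⟨la, hla, hpa⟩ := Submonoid.exists_list_of_mem_closure ha
  cases la with
  | nil =>
    have ha1 : a = 1 := by simpa using hpa.symm
    subst ha1
    have hmb : m = b := B.ldvd_antisymm (hm.2.2 b (LDvd.one' b) (LDvd.refl' b)) hm.2.1
    rw [hmb]; exact hb
  | cons x ta =>
    rw [List.prod_cons] at hpa
    obtain ⟨lb, hlb, hpb⟩ := Submonoid.exists_list_of_mem_closure hb
    cases lb with
    | nil =>
      have hb1 : b = 1 := by simpa using hpb.symm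
      subst hb1
      have hma : m = a := B.ldvd_antisymm (hm.2.2 a (LDvd.refl' a) (LDvd.one' a)) hm.1
      rw [hma]; exact ha
    | cons y tb =>
      rw [List.prod_cons] at hpb
      have hxX : x ∈ X := hla x (by simp)
      have hyX : y ∈ X := hlb y (by simp)
      have hxA : x ∈ AtomSet M := B.hX hxX
      have hyA : y ∈ AtomSet M := B.hX hyX
      have haX : ta.prod ∈ Submonoid.closure X :=
        list_prod_mem (fun z hz => Submonoid.subset_closure (hla z (by simp [hz])))
      have hbX : tb.prod ∈ Submonoid.closure X :=
        list_prod_mem (fun z hz => Submonoid.subset_closure (hlb z (by simp [hz])))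
      by_cases hxy : x = y
      · subst hxy
        have hmm : IsLcmL (x * ta.prod) (x * tb.prod) m := by rw [hpa, hpb]; exact hm
        obtain ⟨m', hm'eq, hm'⟩ := B.head_lcm hmm
        have hnm' : B.nu m' < n := by
          have h1 := B.nu_mul x m'
          have h2 := B.nu_pos x hxA.1
          rw [← hm'eq] at h1
          omega
        have := IH (B.nu m') hnm' m' le_rfl ta.prod tb.prod haX hbX hm'
        rw [hm'eq]
        exact mul_mem (Submonoid.subset_closure hxX) this
      · have hxm : LDvd x m := LDvd.trans' ⟨ta.prod, hpa.symm⟩ hm.1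
        have hym : LDvd y m := LDvd.trans' ⟨tb.prod, hpb.symm⟩ hm.2.1
        have hex : ∃ p, IsLcmL x y p := B.lcm_ex x y ⟨m, hxm, hym⟩
        obtain ⟨hatoms, hlcmp⟩ := B.hf x y hxA hyA hxy hex
        have huX : (B.f x y).prod ∈ Submonoid.closure X :=
          list_prod_mem (fun z hz => Submonoid.subset_closure (B.ha x hxX y hyX hxy hex z hz))
        obtain ⟨q, hq⟩ := B.lcm_ex a y ⟨m, hm.1, hym⟩
        have hxq : LDvd x q := LDvd.trans' ⟨ta.prod, hpa.symm⟩ hq.1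
        have hpq : LDvd (x * (B.f x y).prod) q := hlcmp.2.2 q hxq hq.2.1
        have hq2 : IsLcmL (x * ta.prod) (x * (B.f x y).prod) q := by
          refine ⟨hpa ▸ hq.1, hpq, ?_⟩
          intro c h1 h2
          exact hq.2.2 c (hpa ▸ h1) (LDvd.trans' hlcmp.2.1 h2)
        obtain ⟨r, hqr, hr⟩ := B.head_lcm hq2
        have hqm : LDvd q m := hq.2.2 m hm.1 hym
        have hnr : B.nu r < n := by
          have h1 := B.nu_mul x r
          have h2 := B.nu_pos x hxA.1
          have h3 := B.nu_ldvd hqm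
          rw [← hqr] at h1
          omega
        have hrX := IH (B.nu r) hnr r le_rfl ta.prod (B.f x y).prod haX huX hr
        have hqX : q ∈ Submonoid.closure X := by
          rw [hqr]; exact mul_mem (Submonoid.subset_closure hxX) hrX
        obtain ⟨-, q₂, hq₂X, hq₂⟩ := B.core (B.nu q) q hqX le_rfl y hyA hq.2.1
        have hqbm : IsLcmL q b m :=
          ⟨hqm, hm.2.1, fun c h1 h2 => hm.2.2 c (LDvd.trans' hq.1 h1) h2⟩
        have hqbm' : IsLcmL (y * q₂) (y * tb.prod) m := by rw [← hq₂, hpb]; exact hqbm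
        obtain ⟨m₂, hm₂eq, hm₂⟩ := B.head_lcm hqbm'
        have hnm₂ : B.nu m₂ < n := by
          have h1 := B.nu_mul y m₂
          have h2 := B.nu_pos y hyA.1
          rw [← hm₂eq] at h1
          omega
        have := IH (B.nu m₂) hnm₂ m₂ le_rfl q₂ tb.prod hq₂X hbX hm₂
        rw [hm₂eq]
        exact mul_mem (Submonoid.subset_closure hyX) this

end Bundle

end Bundle28

section Op28

open MulOpposite

variable {M : Type*} [Monoid M]

theorem op_ldvd {a b : M} : LDvd (op a) (op b) ↔ RDvd a b := by
  constructor
  · rintro ⟨c, hc⟩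
    exact ⟨c.unop, by simpa using congrArg unop hc⟩
  · rintro ⟨c, hc⟩
    exact ⟨op c, by rw [hc, op_mul]⟩

theorem op_lcmL {a b m : M} : IsLcmL (op a) (op b) (op m) ↔ IsLcmR a b m := by
  constructor
  · rintro ⟨h1, h2, h3⟩
    refine ⟨op_ldvd.1 h1, op_ldvd.1 h2, fun c hc1 hc2 => ?_⟩
    exact op_ldvd.1 (h3 (op c) (op_ldvd.2 hc1) (op_ldvd.2 hc2))
  · rintro ⟨h1, h2, h3⟩
    refine ⟨op_ldvd.2 h1, op_ldvd.2 h2, fun c hc1 hc2 => ?_⟩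
    rw [← op_unop c] at hc1 hc2 ⊢
    exact op_ldvd.2 (h3 c.unop (op_ldvd.1 hc1) (op_ldvd.1 hc2))

theorem op_atom {a : M} : op a ∈ AtomSet Mᵐᵒᵖ ↔ a ∈ AtomSet M := by
  constructor
  · rintro ⟨h1, h2⟩
    refine ⟨fun h => h1 (by rw [h, op_one]), fun b c hbc => ?_⟩
    rcases h2 (op c) (op b) (by rw [hbc, op_mul]) with h | h
    · right; rwa [op_eq_one_iff] at h
    · left; rwa [op_eq_one_iff] at h
  · rintro ⟨h1, h2⟩
    refine ⟨fun h => h1 (by rwa [op_eq_one_iff] at h), fun b c hbc => ?_⟩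
    have hbc' : a = c.unop * b.unop := by simpa using congrArg unop hbc
    rcases h2 c.unop b.unop hbc' with h | h
    · right; rwa [unop_eq_one_iff] at h
    · left; rwa [unop_eq_one_iff] at h

theorem mem_op_closure {X : Set M} {w : Mᵐᵒᵖ} :
    w ∈ Submonoid.closure (unop ⁻¹' X) ↔ w.unop ∈ Submonoid.closure X := by
  rw [← Submonoid.op_closure]
  exact Submonoid.mem_op

theorem atomSet_op : AtomSet Mᵐᵒᵖ = unop ⁻¹' (AtomSet M) := by
  ext w
  simp only [Set.mem_preimage]
  constructor
  · intro h
    exact op_atom.1 (by rwa [op_unop])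
  · intro h
    rw [← op_unop w]
    exact op_atom.2 h

theorem gen_op (h : Submonoid.closure (AtomSet M) = ⊤) :
    Submonoid.closure (AtomSet Mᵐᵒᵖ) = ⊤ := by
  rw [atomSet_op, ← Submonoid.op_closure, h]
  rfl

end Op28

theorem lcmR_comm {M : Type*} [Monoid M] {a b m : M} (h : IsLcmR a b m) : IsLcmR b a m :=
  ⟨h.2.1, h.1, fun c h1 h2 => h.2.2 c h2 h1⟩

/-- **Theorem 2.8.** Characterization of the subsets `X` of the set of atoms generating
a parabolic submonoid, in terms of a left selector `f_L` and a right selector `f_R`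
on the atoms. -/
theorem theorem_2_8 {M : Type*} [Monoid M] (hM : IsPreGarside M)
    (hgen : Submonoid.closure (AtomSet M) = ⊤)
    (fL fR : M → M → List M)
    (hfL : ∀ x y : M, x ∈ AtomSet M → y ∈ AtomSet M → x ≠ y →
      (∃ m : M, IsLcmL x y m) →
      (∀ l ∈ fL x y, l ∈ AtomSet M) ∧ IsLcmL x y (x * (fL x y).prod) ∧
        IsLcmL x y (y * (fL y x).prod))
    (hfR : ∀ x y : M, x ∈ AtomSet M → y ∈ AtomSet M → x ≠ y →
      (∃ m : M, IsLcmR x y m) →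
      (∀ l ∈ fR x y, l ∈ AtomSet M) ∧ IsLcmR x y ((fR y x).prod * x) ∧
        IsLcmR x y ((fR x y).prod * y))
    (X : Set M) (hX : X ⊆ AtomSet M) :
    IsParabolic (Submonoid.closure X) ↔
      ((∀ x ∈ X, ∀ y ∈ X, x ≠ y →
          ((∃ m : M, IsLcmL x y m) → (∀ l ∈ fL x y, l ∈ X) ∧ ∀ l ∈ fL y x, l ∈ X) ∧
          ((∃ m : M, IsLcmR x y m) → (∀ l ∈ fR x y, l ∈ X) ∧ ∀ l ∈ fR y x, l ∈ X)) ∧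
        ∀ x ∈ X, ∀ y ∈ AtomSet M, y ∉ X →
          ((∃ m : M, IsLcmL x y m) → ¬ ∀ l ∈ fL x y, l ∈ X) ∧
          ((∃ m : M, IsLcmR x y m) → ¬ ∀ l ∈ fR y x, l ∈ X)) := by
  classical
  obtain ⟨hcan, hato, hLex, hRex⟩ := hM
  obtain ⟨ν, hν1, hν2⟩ := hato
  have hmcl := mk_mcl hcan
  have hmcr := mk_mcr hcan
  have hone : ∀ a b : M, a * b = 1 → a = 1 ∧ b = 1 := mk_one ⟨ν, hν1, hν2⟩
  constructor
  · rintro ⟨hspec, hlcmL, hlcmR⟩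
    have letters : ∀ l : List M, (∀ z ∈ l, z ∈ AtomSet M) →
        l.prod ∈ Submonoid.closure X → ∀ z ∈ l, z ∈ X := by
      intro l
      induction l with
      | nil => intro _ _ z hz; exact absurd hz List.not_mem_nil
      | cons w t IHt =>
        intro hatw hp z hz
        rw [List.prod_cons] at hp
        have h1 := hspec w t.prod hp
        rcases List.mem_cons.mp hz with h | h
        · rw [h]; exact atom_mem_of_mem_closure hX (hatw w (by simp)) h1.1
        · exact IHt (fun u hu => hatw u (by simp [hu])) h1.2 z h
    constructor
    · intro x hx y hy hne
      constructor
      · intro hex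
        obtain ⟨hatL, h1, h2⟩ := hfL x y (hX hx) (hX hy) hne hex
        have hatL' : ∀ l ∈ fL y x, l ∈ AtomSet M :=
          (hfL y x (hX hy) (hX hx) (Ne.symm hne) ⟨_, lcmL_comm h1⟩).1
        have hm1 : x * (fL x y).prod ∈ Submonoid.closure X :=
          hlcmL x y _ (Submonoid.subset_closure hx) (Submonoid.subset_closure hy) h1
        have hm2 : y * (fL y x).prod ∈ Submonoid.closure X :=
          hlcmL x y _ (Submonoid.subset_closure hx) (Submonoid.subset_closure hy) h2
        exact ⟨letters _ hatL (hspec _ _ hm1).2, letters _ hatL' (hspec _ _ hm2).2⟩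
      · intro hex
        obtain ⟨hatR, h1, h2⟩ := hfR x y (hX hx) (hX hy) hne hex
        have hatR' : ∀ l ∈ fR y x, l ∈ AtomSet M :=
          (hfR y x (hX hy) (hX hx) (Ne.symm hne) ⟨_, lcmR_comm h1⟩).1
        have hm1 : (fR y x).prod * x ∈ Submonoid.closure X :=
          hlcmR x y _ (Submonoid.subset_closure hx) (Submonoid.subset_closure hy) h1
        have hm2 : (fR x y).prod * y ∈ Submonoid.closure X :=
          hlcmR x y _ (Submonoid.subset_closure hx) (Submonoid.subset_closure hy) h2
        exact ⟨letters _ hatR (hspec _ _ hm2).1, letters _ hatR' (hspec _ _ hm1).1⟩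
    · intro x hx y hyA hyn
      have hne : x ≠ y := fun h => hyn (h ▸ hx)
      constructor
      · intro hex hall
        obtain ⟨hatL, h1, h2⟩ := hfL x y (hX hx) hyA hne hex
        have hm1 : x * (fL x y).prod ∈ Submonoid.closure X :=
          mul_mem (Submonoid.subset_closure hx)
            (list_prod_mem fun l hl => Submonoid.subset_closure (hall l hl))
        have heq : x * (fL x y).prod = y * (fL y x).prod := lcmL_unique' hmcl hone h1 h2
        have hyN : y ∈ Submonoid.closure X := (hspec y _ (by rw [← heq]; exact hm1)).1
        exact hyn (atom_mem_of_mem_closure hX hyA hyN)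
      · intro hex hall
        obtain ⟨hatR, h1, h2⟩ := hfR x y (hX hx) hyA hne hex
        have hm1 : (fR y x).prod * x ∈ Submonoid.closure X :=
          mul_mem (list_prod_mem fun l hl => Submonoid.subset_closure (hall l hl))
            (Submonoid.subset_closure hx)
        have heq : (fR y x).prod * x = (fR x y).prod * y := lcmR_unique' hmcr hone h1 h2
        have hyN : y ∈ Submonoid.closure X := (hspec _ y (by rw [← heq]; exact hm1)).2
        exact hyn (atom_mem_of_mem_closure hX hyA hyN)
  · rintro ⟨Ha, Hb⟩
    have unopatom : ∀ w : Mᵐᵒᵖ, w ∈ AtomSet Mᵐᵒᵖ → w.unop ∈ AtomSet M := by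
      intro w hw; rwa [atomSet_op] at hw
    have exR : ∀ x y : Mᵐᵒᵖ, (∃ m, IsLcmL x y m) → ∃ m, IsLcmR x.unop y.unop m := by
      rintro x y ⟨m, hm⟩
      refine ⟨m.unop, ?_⟩
      rw [← MulOpposite.op_unop x, ← MulOpposite.op_unop y, ← MulOpposite.op_unop m] at hm
      exact op_lcmL.1 hm
    let BL : Bundle M X :=
      { nu := ν, nu_pos := hν1, nu_mul := hν2, mcl := hmcl, lcm_ex := hLex, gen := hgen
        f := fL
        hf := fun x y hx hy hne hex =>
          ⟨(hfL x y hx hy hne hex).1, (hfL x y hx hy hne hex).2.1⟩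
        hX := hX
        ha := fun x hx y hy hne hex => ((Ha x hx y hy hne).1 hex).1
        hb := fun x hx y hy hyn hex => (Hb x hx y hy hyn).1 hex }
    let BR : Bundle Mᵐᵒᵖ (MulOpposite.unop ⁻¹' X) :=
      { nu := fun w => ν w.unop
        nu_pos := fun w hw => hν1 w.unop
          (fun h => hw (by rw [← MulOpposite.op_unop w, h, MulOpposite.op_one]))
        nu_mul := fun a b => by rw [MulOpposite.unop_mul, add_comm]; exact hν2 _ _
        mcl := fun a b c h =>
          MulOpposite.unop_injective
            (hmcr a.unop b.unop c.unop (by simpa using congrArg MulOpposite.unop h))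
        lcm_ex := by
          rintro a b ⟨c, h1, h2⟩
          rw [← MulOpposite.op_unop a, ← MulOpposite.op_unop c] at h1
          rw [← MulOpposite.op_unop b, ← MulOpposite.op_unop c] at h2
          obtain ⟨m, hm⟩ := hRex a.unop b.unop ⟨c.unop, op_ldvd.1 h1, op_ldvd.1 h2⟩
          refine ⟨MulOpposite.op m, ?_⟩
          rw [← MulOpposite.op_unop a, ← MulOpposite.op_unop b]
          exact op_lcmL.2 hm
        gen := gen_op hgen
        f := fun x y => ((fR y.unop x.unop).map MulOpposite.op).reverse
        hf := by
          intro x y hx hy hne hex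
          have hxa := unopatom x hx
          have hya := unopatom y hy
          have hne' : x.unop ≠ y.unop := fun h => hne (MulOpposite.unop_injective h)
          have hexR := exR x y hex
          obtain ⟨hat', h1, -⟩ := hfR x.unop y.unop hxa hya hne' hexR
          have hat2 : ∀ l ∈ fR y.unop x.unop, l ∈ AtomSet M :=
            (hfR y.unop x.unop hya hxa (Ne.symm hne')
              ⟨_, lcmR_comm hexR.choose_spec⟩).1
          constructor
          · intro l hl
            rw [List.mem_reverse, List.mem_map] at hl
            obtain ⟨z, hz, rfl⟩ := hl
            exact op_atom.2 (hat2 z hz)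
          · have hprod : (((fR y.unop x.unop).map MulOpposite.op).reverse).prod
                = MulOpposite.op ((fR y.unop x.unop).prod) :=
              (MulOpposite.op_list_prod _).symm
            rw [hprod, ← MulOpposite.op_unop x, ← MulOpposite.op_unop y,
              ← MulOpposite.op_mul]
            exact op_lcmL.2 h1
        hX := fun w hw => by rw [atomSet_op]; exact hX hw
        ha := by
          intro x hx y hy hne hex
          have hne' : x.unop ≠ y.unop := fun h => hne (MulOpposite.unop_injective h)
          have h := ((Ha x.unop hx y.unop hy hne').2 (exR x y hex)).2
          intro l hl
          rw [List.mem_reverse, List.mem_map] at hl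
          obtain ⟨z, hz, rfl⟩ := hl
          exact h z hz
        hb := by
          intro x hx y hy hyn hex
          have hya := unopatom y hy
          have hyn' : y.unop ∉ X := fun h => hyn h
          have h := (Hb x.unop hx y.unop hya hyn').2 (exR x y hex)
          intro hall
          exact h (fun z hz =>
            hall (MulOpposite.op z) (by rw [List.mem_reverse, List.mem_map]; exact ⟨z, hz, rfl⟩)) }
    refine ⟨?_, ?_, ?_⟩
    · intro u v huv
      refine ⟨BL.ldvd_mem huv ⟨v, rfl⟩, ?_⟩
      have h1 : MulOpposite.op (u * v) ∈ Submonoid.closure (MulOpposite.unop ⁻¹' X) :=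
        mem_op_closure.2 (by rwa [MulOpposite.unop_op])
      have h2 := BR.ldvd_mem h1 ⟨MulOpposite.op u, MulOpposite.op_mul u v⟩
      have h3 := mem_op_closure.1 h2
      rwa [MulOpposite.unop_op] at h3
    · intro a b m ha hb hm
      exact BL.lcm_mem (BL.nu m) m le_rfl a b ha hb hm
    · intro a b m ha hb hm
      have h1 := BR.lcm_mem (BR.nu (MulOpposite.op m)) (MulOpposite.op m) le_rfl
        (MulOpposite.op a) (MulOpposite.op b)
        (mem_op_closure.2 (by rwa [MulOpposite.unop_op]))
        (mem_op_closure.2 (by rwa [MulOpposite.unop_op])) (op_lcmL.2 hm)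
      have h3 := mem_op_closure.1 h1
      rwa [MulOpposite.unop_op] at h3


end PG
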